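/- Let n ≥ 1 and B ≥ 2 be integers. The function E : Δ_n → ℝ is lower semi-continuous: if x_i ∈ Δ_n and x_i → x as i → ∞, then E(x) ≤ liminf_{i→∞} E(x_i). -/

import Mathlib

open Finset Filter

/-- The extremal function
`E(x) = min{ Σ m(j) x(j) : m(j) ∈ ℕ, Σ sgn(x(j)) B^{-m(j)} ≤ 1 }`. -/
noncomputable def Efun (n B : ℕ) (x : Fin (n + 1) → ℝ) : ℝ :=
  sInf { s : ℝ | ∃ m : Fin (n + 1) → ℕ,
    (∑ j, Real.sign (x j) * ((B : ℝ) ^ (m j))⁻¹) ≤ 1 ∧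
    s = ∑ j, (m j : ℝ) * x j }

lemma sign_of_nonneg' (a : ℝ) (ha : 0 ≤ a) :
    Real.sign a = if a = 0 then 0 else 1 := by
  rcases ha.eq_or_lt with h | h
  · simp [← h]
  · simp [h.ne', Real.sign_of_pos h]

lemma sign_nonneg' (a : ℝ) (ha : 0 ≤ a) : 0 ≤ Real.sign a := by
  rw [sign_of_nonneg' a ha]; split <;> norm_num

lemma sign_le_one' (a : ℝ) (ha : 0 ≤ a) : Real.sign a ≤ 1 := by
  rw [sign_of_nonneg' a ha]; split <;> norm_num

lemma Efun_set_nonempty (n B : ℕ) (hB : 2 ≤ B) (y : Fin (n + 1) → ℝ)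
    (hy : ∀ j, 0 ≤ y j) :
    (∑ j, ((n + 1 : ℕ) : ℝ) * y j) ∈ { s : ℝ | ∃ m : Fin (n + 1) → ℕ,
      (∑ j, Real.sign (y j) * ((B : ℝ) ^ (m j))⁻¹) ≤ 1 ∧
      s = ∑ j, (m j : ℝ) * y j } := by
  refine ⟨fun _ => n + 1, ?_, by norm_num⟩
  have hB0 : (0:ℝ) < (B:ℝ) := by positivity
  have hBpos : (0:ℝ) < (B:ℝ) ^ (n + 1) := by positivity
  have hle : ((n:ℝ) + 1) ≤ (B:ℝ) ^ (n + 1) := by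
    have h2 : ((n:ℝ) + 1) ≤ (2:ℝ) ^ (n + 1) := by
      exact_mod_cast (Nat.lt_two_pow_self (n := n + 1)).le
    refine h2.trans (pow_le_pow_left₀ (by norm_num) ?_ _)
    exact_mod_cast hB
  calc ∑ j, Real.sign (y j) * ((B : ℝ) ^ (n + 1))⁻¹
      ≤ ∑ _j : Fin (n + 1), 1 * ((B : ℝ) ^ (n + 1))⁻¹ := by
        refine Finset.sum_le_sum fun j _ => ?_
        exact mul_le_mul_of_nonneg_right (sign_le_one' _ (hy j)) (by positivity)
    _ = ((n:ℝ) + 1) * ((B:ℝ) ^ (n + 1))⁻¹ := by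
        rw [Finset.sum_const]; simp [mul_comm]
    _ ≤ 1 := by
        rw [mul_inv_le_iff₀ hBpos, one_mul]; exact hle

lemma Efun_bddBelow (n B : ℕ) (y : Fin (n + 1) → ℝ) (hy : ∀ j, 0 ≤ y j) :
    BddBelow { s : ℝ | ∃ m : Fin (n + 1) → ℕ,
      (∑ j, Real.sign (y j) * ((B : ℝ) ^ (m j))⁻¹) ≤ 1 ∧
      s = ∑ j, (m j : ℝ) * y j } := by
  refine ⟨0, fun s hs => ?_⟩
  obtain ⟨m, -, rfl⟩ := hs
  exact Finset.sum_nonneg fun j _ => mul_nonneg (by positivity) (hy j)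

lemma Efun_nonneg (n B : ℕ) (hB : 2 ≤ B) (y : Fin (n + 1) → ℝ) (hy : ∀ j, 0 ≤ y j) :
    0 ≤ Efun n B y := by
  refine le_csInf ⟨_, Efun_set_nonempty n B hB y hy⟩ fun s hs => ?_
  obtain ⟨m, -, rfl⟩ := hs
  exact Finset.sum_nonneg fun j _ => mul_nonneg (by positivity) (hy j)

lemma Efun_le_bound (n B : ℕ) (hB : 2 ≤ B) (y : Fin (n + 1) → ℝ)
    (hy : y ∈ stdSimplex ℝ (Fin (n + 1))) : Efun n B y ≤ (n : ℝ) + 1 := by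
  have h := csInf_le (Efun_bddBelow n B y hy.1) (Efun_set_nonempty n B hB y hy.1)
  calc Efun n B y ≤ ∑ j, ((n + 1 : ℕ) : ℝ) * y j := h
    _ = ((n:ℝ) + 1) * ∑ j, y j := by rw [Finset.mul_sum]; norm_num
    _ = (n : ℝ) + 1 := by rw [hy.2, mul_one]

theorem stmt6 (n B : ℕ) (hn : 1 ≤ n) (hB : 2 ≤ B)
    (xs : ℕ → (Fin (n + 1) → ℝ)) (x : Fin (n + 1) → ℝ)
    (hxs : ∀ i, xs i ∈ stdSimplex ℝ (Fin (n + 1)))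
    (hx : x ∈ stdSimplex ℝ (Fin (n + 1)))
    (hlim : Tendsto xs atTop (nhds x)) :
    Efun n B x ≤ liminf (fun i => Efun n B (xs i)) atTop := by
  set F : ℕ → ℝ := fun i => Efun n B (xs i) with hF
  set L : ℝ := liminf F atTop with hL
  have hFnn : ∀ i, 0 ≤ F i := fun i => Efun_nonneg n B hB (xs i) (hxs i).1
  have hFub : ∀ i, F i ≤ (n : ℝ) + 1 := fun i => Efun_le_bound n B hB (xs i) (hxs i)
  have hbddAbove : IsBoundedUnder (· ≤ ·) atTop F :=
    isBoundedUnder_of ⟨(n : ℝ) + 1, hFub⟩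
  have hco : IsCoboundedUnder (· ≥ ·) atTop F := hbddAbove.isCoboundedUnder_ge
  have hL0 : 0 ≤ L := le_liminf_of_le hco (Eventually.of_forall hFnn)
  have hExnn : 0 ≤ Efun n B x := Efun_nonneg n B hB x hx.1
  have hExub : Efun n B x ≤ (n : ℝ) + 1 := Efun_le_bound n B hB x hx
  refine le_of_forall_pos_le_add fun ε hε => ?_
  -- choose δ
  set δ : ℝ := min (ε / (2 * ((n : ℝ) + 1))) (1 / 2) with hδdef
  have hn1 : (0:ℝ) < (n : ℝ) + 1 := by positivity
  have hδ0 : 0 < δ := lt_min (by positivity) (by norm_num)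
  have hδhalf : δ ≤ 1 / 2 := min_le_right _ _
  have hδ1 : δ < 1 := lt_of_le_of_lt hδhalf (by norm_num)
  have h1δ : (0:ℝ) < 1 - δ := by linarith
  have hδn : δ * ((n : ℝ) + 1) ≤ ε / 2 := by
    have : δ ≤ ε / (2 * ((n : ℝ) + 1)) := min_le_left _ _
    calc δ * ((n : ℝ) + 1) ≤ ε / (2 * ((n : ℝ) + 1)) * ((n : ℝ) + 1) := by
          exact mul_le_mul_of_nonneg_right this hn1.le
      _ = ε / 2 := by field_simp
  -- eventual coordinatewise lower bound
  have hev : ∀ᶠ i in atTop, ∀ j, x j ≠ 0 → (1 - δ) * x j ≤ xs i j := by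
    rw [Filter.eventually_all]
    intro j
    by_cases hxj : x j = 0
    · exact Eventually.of_forall fun i h => absurd hxj h
    · have hxjpos : 0 < x j := lt_of_le_of_ne (hx.1 j) (Ne.symm hxj)
      have hlt : (1 - δ) * x j < x j := by nlinarith
      have htj : Tendsto (fun i => xs i j) atTop (nhds (x j)) :=
        (tendsto_pi_nhds.mp hlim) j
      filter_upwards [htj.eventually (eventually_ge_nhds hlt)] with i hi _
      exact hi
  -- frequently F i < L + ε/2
  have hfreq : ∃ᶠ i in atTop, F i < L + ε / 2 :=
    frequently_lt_of_liminf_lt hco (by linarith)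
  obtain ⟨i, hiF, hiev⟩ := (hfreq.and_eventually hev).exists
  -- extract near-optimal m for xs i
  have hne : { s : ℝ | ∃ m : Fin (n + 1) → ℕ,
      (∑ j, Real.sign (xs i j) * ((B : ℝ) ^ (m j))⁻¹) ≤ 1 ∧
      s = ∑ j, (m j : ℝ) * xs i j }.Nonempty :=
    ⟨_, Efun_set_nonempty n B hB (xs i) (hxs i).1⟩
  obtain ⟨s, hs_mem, hs_lt⟩ := exists_lt_of_csInf_lt hne hiF
  obtain ⟨m, hm_feas, rfl⟩ := hs_mem
  -- m is feasible for x
  have hfeasx : (∑ j, Real.sign (x j) * ((B : ℝ) ^ (m j))⁻¹) ≤ 1 := by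
    refine le_trans (Finset.sum_le_sum fun j _ => ?_) hm_feas
    by_cases hxj : x j = 0
    · rw [hxj, Real.sign_zero, zero_mul]
      exact mul_nonneg (sign_nonneg' _ ((hxs i).1 j)) (by positivity)
    · have hxjpos : 0 < x j := lt_of_le_of_ne (hx.1 j) (Ne.symm hxj)
      have hxsjpos : 0 < xs i j := lt_of_lt_of_le (by nlinarith) (hiev j hxj)
      rw [Real.sign_of_pos hxjpos, Real.sign_of_pos hxsjpos]
  have hEx_le : Efun n B x ≤ ∑ j, (m j : ℝ) * x j :=
    csInf_le (Efun_bddBelow n B x hx.1) ⟨m, hfeasx, rfl⟩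
  -- comparison of the two sums
  have hsum : ∑ j, (m j : ℝ) * x j ≤ (1 - δ)⁻¹ * ∑ j, (m j : ℝ) * xs i j := by
    rw [Finset.mul_sum]
    refine Finset.sum_le_sum fun j _ => ?_
    by_cases hxj : x j = 0
    · rw [hxj, mul_zero]
      have : 0 ≤ (m j : ℝ) * xs i j := mul_nonneg (by positivity) ((hxs i).1 j)
      positivity
    · have h := hiev j hxj
      have hmj : (0:ℝ) ≤ (m j : ℝ) := by positivity
      rw [mul_comm ((1 - δ)⁻¹) _, mul_assoc]
      refine mul_le_mul_of_nonneg_left ?_ hmj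
      rw [mul_comm (xs i j) _, ← div_eq_inv_mul] at *
      rw [le_div_iff₀ h1δ]
      linarith [hiev j hxj]
  have hstep : Efun n B x ≤ (1 - δ)⁻¹ * (L + ε / 2) := by
    refine hEx_le.trans (hsum.trans ?_)
    exact mul_le_mul_of_nonneg_left hs_lt.le (by positivity)
  -- finish
  have h2 : (1 - δ) * Efun n B x ≤ L + ε / 2 := by
    calc (1 - δ) * Efun n B x ≤ (1 - δ) * ((1 - δ)⁻¹ * (L + ε / 2)) :=
          mul_le_mul_of_nonneg_left hstep h1δ.le
      _ = L + ε / 2 := by field_simp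
  nlinarith [mul_le_mul_of_nonneg_left hExub hδ0.le]
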